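/- The variance estimator is bounded by the empirical error variance: under the conditions of the previous identity, σ̂² := n^{-1}(f⁽ⁿ⁾ − μ̂ 1_n)'(I_n − Π)(f⁽ⁿ⁾ − μ̂ 1_n) ≤ P_n(ε²); consequently, when X_1,...,X_n are iid from P and ε has mean zero under P, the estimator σ̂² has nonpositive bias: E[σ̂²] ≤ P(ε²). -/

import Mathlib

open MeasureTheory Matrix

private lemma dot_symm {k : ℕ} (A : Matrix (Fin k) (Fin k) ℝ) (hA : Aᵀ = A)
    (x y : Fin k → ℝ) : x ⬝ᵥ (A *ᵥ y) = y ⬝ᵥ (A *ᵥ x) := by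
  rw [Matrix.dotProduct_mulVec, ← Matrix.mulVec_transpose, hA, dotProduct_comm]

private lemma aux_pointwise {n m : ℕ} (hn : 0 < n)
    (H : Matrix (Fin n) (Fin m) ℝ) (G : Matrix (Fin m) (Fin m) ℝ)
    (hG : G = (n : ℝ)⁻¹ • (Hᵀ * H)) (hGdet : IsUnit G.det)
    (p : Fin m → ℝ) (hp : ∀ j, p j = (n : ℝ)⁻¹ * ∑ i, H i j)
    (fv e : Fin n → ℝ) (β : Fin m → ℝ) (μ : ℝ)
    (hfv : ∀ i, fv i = μ + (H *ᵥ β) i + e i)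
    (hden : p ⬝ᵥ (G⁻¹ *ᵥ p) < 1)
    (μh : ℝ)
    (hμh : μh = ((n : ℝ)⁻¹ * ∑ i, fv i -
        (fun j => (n : ℝ)⁻¹ * ∑ i, fv i * H i j) ⬝ᵥ (G⁻¹ *ᵥ p)) / (1 - p ⬝ᵥ (G⁻¹ *ᵥ p))) :
    (fun i => fv i - μh) ⬝ᵥ ((1 - (n : ℝ)⁻¹ • (H * G⁻¹ * Hᵀ)) *ᵥ fun i => fv i - μh)
      ≤ e ⬝ᵥ e := by
  have hn' : (0 : ℝ) < n := by exact_mod_cast hn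
  have hnne : (n : ℝ) ≠ 0 := ne_of_gt hn'
  have hGsym : Gᵀ = G := by
    rw [hG]; simp [Matrix.transpose_smul, Matrix.transpose_mul]
  have hGisym : (G⁻¹)ᵀ = G⁻¹ := by rw [Matrix.transpose_nonsing_inv, hGsym]
  have hGi : G⁻¹ * G = 1 := Matrix.nonsing_inv_mul G hGdet
  have hGi' : G * G⁻¹ = 1 := Matrix.mul_nonsing_inv G hGdet
  have hHtH : Hᵀ * H = (n : ℝ) • G := by
    rw [hG, smul_smul, mul_inv_cancel₀ hnne, one_smul]
  set Pm : Matrix (Fin n) (Fin n) ℝ := (n : ℝ)⁻¹ • (H * G⁻¹ * Hᵀ) with hPm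
  set M : Matrix (Fin n) (Fin n) ℝ := 1 - Pm with hM
  have hPmH : Pm * H = H := by
    rw [hPm, Matrix.smul_mul, Matrix.mul_assoc, hHtH, Matrix.mul_smul, Matrix.mul_assoc,
      hGi, Matrix.mul_one, smul_smul, inv_mul_cancel₀ hnne, one_smul]
  have hMH : M * H = 0 := by rw [hM, Matrix.sub_mul, Matrix.one_mul, hPmH, sub_self]
  have hPmsym : Pmᵀ = Pm := by
    rw [hPm, Matrix.transpose_smul]
    congr 1
    rw [Matrix.transpose_mul, Matrix.transpose_mul, Matrix.transpose_transpose, hGisym,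
      Matrix.mul_assoc]
  have hMsym : Mᵀ = M := by rw [hM, Matrix.transpose_sub, Matrix.transpose_one, hPmsym]
  set u : Fin n → ℝ := fun _ => 1 with hu
  have hHtu : Hᵀ *ᵥ u = (n : ℝ) • p := by
    funext j
    simp only [Matrix.mulVec, dotProduct, Matrix.transpose_apply, hu, mul_one,
      Pi.smul_apply, smul_eq_mul, hp]
    rw [← mul_assoc, mul_inv_cancel₀ hnne, one_mul]
  -- u ⬝ᵥ Pm *ᵥ x = p ⬝ᵥ G⁻¹ *ᵥ (Hᵀ *ᵥ x)
  have huPm : ∀ x : Fin n → ℝ, u ⬝ᵥ (Pm *ᵥ x) = p ⬝ᵥ (G⁻¹ *ᵥ (Hᵀ *ᵥ x)) := by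
    intro x
    rw [hPm, Matrix.smul_mulVec, dotProduct_smul, ← Matrix.mulVec_mulVec,
      ← Matrix.mulVec_mulVec, Matrix.dotProduct_mulVec (v := u) (A := H),
      ← Matrix.mulVec_transpose, hHtu, smul_dotProduct, smul_eq_mul, smul_eq_mul,
      ← mul_assoc, inv_mul_cancel₀ hnne, one_mul]
  have huu : u ⬝ᵥ u = (n : ℝ) := by
    simp [hu, dotProduct]
  set d : ℝ := p ⬝ᵥ (G⁻¹ *ᵥ p) with hd
  set A : ℝ := u ⬝ᵥ (M *ᵥ u) with hAdef
  have hA : A = (n : ℝ) * (1 - d) := by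
    rw [hAdef, hM, Matrix.sub_mulVec, Matrix.one_mulVec, dotProduct_sub, huu, huPm,
      hHtu, Matrix.mulVec_smul, dotProduct_smul, hd, smul_eq_mul]
    ring
  have hApos : 0 < A := by
    rw [hA]; exact mul_pos hn' (by linarith [hden])
  -- u ⬝ᵥ M *ᵥ fv = μh * A
  have hw : Hᵀ *ᵥ fv = (n : ℝ) • (fun j => (n : ℝ)⁻¹ * ∑ i, fv i * H i j) := by
    funext j
    simp only [Matrix.mulVec, dotProduct, Matrix.transpose_apply, Pi.smul_apply,
      smul_eq_mul]
    rw [← mul_assoc, mul_inv_cancel₀ hnne, one_mul]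
    exact Finset.sum_congr rfl fun i _ => mul_comm _ _
  have hufv : u ⬝ᵥ fv = ∑ i, fv i := by simp [hu, dotProduct]
  have hkey : u ⬝ᵥ (M *ᵥ fv) = μh * A := by
    rw [hM, Matrix.sub_mulVec, Matrix.one_mulVec, dotProduct_sub, hufv, huPm, hw,
      Matrix.mulVec_smul, dotProduct_smul, smul_eq_mul]
    rw [dot_symm G⁻¹ hGisym]
    rw [hμh, hA]
    have h1d : (1 : ℝ) - d ≠ 0 := by intro hc; rw [hd] at *; linarith [hden]
    field_simp
    try ring
  -- decomposition
  set c : ℝ := μ - μh with hc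
  set v : Fin n → ℝ := fun i => fv i - μh with hv
  have hvdec : v = c • u + (H *ᵥ β + e) := by
    funext i
    simp [hv, hfv i, hc, hu]
    try ring
  have hedec : e = fv - (μ • u + H *ᵥ β) := by
    funext i
    simp [hfv i, hu]
    try ring
  have hMHβ : M *ᵥ (H *ᵥ β) = 0 := by
    rw [Matrix.mulVec_mulVec, hMH, Matrix.zero_mulVec]
  have huMe : u ⬝ᵥ (M *ᵥ e) = -(c * A) := by
    rw [hedec, Matrix.mulVec_sub, dotProduct_sub, hkey, Matrix.mulVec_add,
      dotProduct_add, Matrix.mulVec_smul, dotProduct_smul, ← hAdef, hMHβ]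
    simp [hc]
    try ring
  -- expand v ⬝ᵥ M v
  have hexp : v ⬝ᵥ (M *ᵥ v) = c ^ 2 * A + 2 * c * (u ⬝ᵥ (M *ᵥ e)) + e ⬝ᵥ (M *ᵥ e) := by
    rw [hvdec]
    rw [Matrix.mulVec_add, Matrix.mulVec_add, hMHβ, Matrix.mulVec_smul]
    simp only [add_dotProduct, dotProduct_add, smul_dotProduct,
      dotProduct_smul, dotProduct_zero, zero_add, add_zero, smul_eq_mul]
    have h1 : (H *ᵥ β) ⬝ᵥ (M *ᵥ u) = u ⬝ᵥ (M *ᵥ (H *ᵥ β)) := dot_symm M hMsym _ _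
    have h2 : (H *ᵥ β) ⬝ᵥ (M *ᵥ e) = e ⬝ᵥ (M *ᵥ (H *ᵥ β)) := dot_symm M hMsym _ _
    have h3 : e ⬝ᵥ (M *ᵥ u) = u ⬝ᵥ (M *ᵥ e) := dot_symm M hMsym _ _
    rw [h1, h2, h3, hMHβ, ← hAdef]
    simp
    try ring
  -- e ⬝ᵥ Pm e ≥ 0
  have hGipsd : ∀ x : Fin m → ℝ, 0 ≤ x ⬝ᵥ (G⁻¹ *ᵥ x) := by
    intro x
    set y : Fin m → ℝ := G⁻¹ *ᵥ x with hy
    have hx : G *ᵥ y = x := by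
      rw [hy, Matrix.mulVec_mulVec, hGi', Matrix.one_mulVec]
    have : x ⬝ᵥ (G⁻¹ *ᵥ x) = (n : ℝ)⁻¹ * ((H *ᵥ y) ⬝ᵥ (H *ᵥ y)) := by
      rw [← hy, ← hx, dotProduct_comm, hG, Matrix.smul_mulVec,
        dotProduct_smul, smul_eq_mul, ← Matrix.mulVec_mulVec,
        Matrix.dotProduct_mulVec (A := Hᵀ), Matrix.vecMul_transpose]
    rw [this]
    have : 0 ≤ (H *ᵥ y) ⬝ᵥ (H *ᵥ y) :=
      Finset.sum_nonneg fun i _ => mul_self_nonneg _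
    positivity
  have hePm : 0 ≤ e ⬝ᵥ (Pm *ᵥ e) := by
    have : e ⬝ᵥ (Pm *ᵥ e) = (n : ℝ)⁻¹ * ((Hᵀ *ᵥ e) ⬝ᵥ (G⁻¹ *ᵥ (Hᵀ *ᵥ e))) := by
      rw [hPm, Matrix.smul_mulVec, dotProduct_smul, smul_eq_mul,
        ← Matrix.mulVec_mulVec, ← Matrix.mulVec_mulVec,
        Matrix.dotProduct_mulVec (A := H), ← Matrix.mulVec_transpose]
    rw [this]
    have := hGipsd (Hᵀ *ᵥ e)
    positivity
  have heM : e ⬝ᵥ (M *ᵥ e) ≤ e ⬝ᵥ e := by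
    rw [hM, Matrix.sub_mulVec, Matrix.one_mulVec, dotProduct_sub]
    linarith
  calc v ⬝ᵥ (M *ᵥ v) = c ^ 2 * A + 2 * c * (u ⬝ᵥ (M *ᵥ e)) + e ⬝ᵥ (M *ᵥ e) := hexp
    _ = e ⬝ᵥ (M *ᵥ e) - c ^ 2 * A := by rw [huMe]; ring
    _ ≤ e ⬝ᵥ (M *ᵥ e) := by nlinarith [sq_nonneg c, hApos]
    _ ≤ e ⬝ᵥ e := heM

/-- The variance estimator is bounded by the empirical error variance:
`σ̂² ≤ P_n(ε²)` pointwise, and, when the `X_i` are iid from `P` and `ε` is centered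
under `P`, the estimator has nonpositive bias: `E[σ̂²] ≤ P(ε²)`. -/
theorem stmt6 {S Ω : Type*} [MeasurableSpace S] [MeasurableSpace Ω]
    (P : Measure S) [IsProbabilityMeasure P] (Q : Measure Ω) [IsProbabilityMeasure Q]
    {n m : ℕ} (hn : 0 < n)
    (h : Fin m → S → ℝ) (ε : S → ℝ) (μ : ℝ) (β : Fin m → ℝ) (f : S → ℝ)
    (hfdef : ∀ x, f x = μ + (∑ j, β j * h j x) + ε x)
    (hεmeas : Measurable ε) (hεL2 : MemLp ε 2 P)
    (hεmean : ∫ x, ε x ∂P = 0) (hhε : ∀ j, ∫ x, h j x * ε x ∂P = 0)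
    (X : Fin n → Ω → S) (hXmeas : ∀ i, Measurable (X i))
    (hlaw : ∀ i, Measure.map (X i) Q = P)
    (hindep : ProbabilityTheory.iIndepFun X Q)
    (Hm : Ω → Matrix (Fin n) (Fin m) ℝ) (hHm : ∀ ω i j, Hm ω i j = h j (X i ω))
    (G : Ω → Matrix (Fin m) (Fin m) ℝ) (hG : ∀ ω, G ω = (n : ℝ)⁻¹ • ((Hm ω)ᵀ * Hm ω))
    (hGdet : ∀ ω, IsUnit (G ω).det)
    (Pnh : Ω → Fin m → ℝ) (hPnh : ∀ ω j, Pnh ω j = (n : ℝ)⁻¹ * ∑ i, h j (X i ω))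
    (hden : ∀ ω, Pnh ω ⬝ᵥ ((G ω)⁻¹ *ᵥ Pnh ω) < 1)
    (μhat : Ω → ℝ)
    (hμhat : ∀ ω, μhat ω =
      ((n : ℝ)⁻¹ * ∑ i, f (X i ω) -
          (fun j => (n : ℝ)⁻¹ * ∑ i, f (X i ω) * h j (X i ω)) ⬝ᵥ ((G ω)⁻¹ *ᵥ Pnh ω)) /
        (1 - Pnh ω ⬝ᵥ ((G ω)⁻¹ *ᵥ Pnh ω)))
    (σhat : Ω → ℝ)
    (hσhat : ∀ ω, σhat ω = (n : ℝ)⁻¹ *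
      ((fun i => f (X i ω) - μhat ω) ⬝ᵥ
        ((1 - (n : ℝ)⁻¹ • (Hm ω * (G ω)⁻¹ * (Hm ω)ᵀ)) *ᵥ fun i => f (X i ω) - μhat ω)))
    (hint : Integrable σhat Q) :
    (∀ ω, σhat ω ≤ (n : ℝ)⁻¹ * ∑ i, ε (X i ω) ^ 2) ∧
      ∫ ω, σhat ω ∂Q ≤ ∫ x, ε x ^ 2 ∂P := by
  have hn' : (0 : ℝ) < n := by exact_mod_cast hn
  have hpt : ∀ ω, σhat ω ≤ (n : ℝ)⁻¹ * ∑ i, ε (X i ω) ^ 2 := by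
    intro ω
    have hbd := aux_pointwise hn (Hm ω) (G ω) (hG ω) (hGdet ω) (Pnh ω)
        (fun j => by rw [hPnh ω j]; congr 1; exact Finset.sum_congr rfl fun i _ => (hHm ω i j).symm)
        (fun i => f (X i ω)) (fun i => ε (X i ω)) β μ
        (fun i => by
          show f (X i ω) = μ + (Hm ω *ᵥ β) i + ε (X i ω)
          rw [hfdef (X i ω)]
          congr 2
          simp only [Matrix.mulVec, dotProduct, hHm]
          exact Finset.sum_congr rfl fun j _ => mul_comm _ _)
        (hden ω) (μhat ω)
        (by
          simp only [hHm]
          exact hμhat ω)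
    rw [hσhat ω]
    apply mul_le_mul_of_nonneg_left _ (by positivity)
    refine le_trans hbd ?_
    simp only [dotProduct]
    exact le_of_eq (Finset.sum_congr rfl fun i _ => (sq (ε (X i ω))).symm)
  refine ⟨hpt, ?_⟩
  have hsq : Integrable (fun x => ε x ^ 2) P := hεL2.integrable_sq
  have hsm : ∀ i : Fin n, AEStronglyMeasurable (fun x => ε x ^ 2) (Measure.map (X i) Q) :=
    fun i => ((hεmeas.pow_const 2).aestronglyMeasurable)
  have hci : ∀ i : Fin n, Integrable (fun ω => ε (X i ω) ^ 2) Q := by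
    intro i
    have := (integrable_map_measure (hsm i) (hXmeas i).aemeasurable).mp
      (by rw [hlaw i]; exact hsq)
    exact this
  have hii : ∀ i : Fin n, ∫ ω, ε (X i ω) ^ 2 ∂Q = ∫ x, ε x ^ 2 ∂P := by
    intro i
    rw [← hlaw i, integral_map (hXmeas i).aemeasurable (hsm i)]
  have hgint : Integrable (fun ω => (n : ℝ)⁻¹ * ∑ i, ε (X i ω) ^ 2) Q :=
    (integrable_finset_sum Finset.univ fun i _ => hci i).const_mul _
  calc ∫ ω, σhat ω ∂Q ≤ ∫ ω, (n : ℝ)⁻¹ * ∑ i, ε (X i ω) ^ 2 ∂Q :=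
        integral_mono hint hgint hpt
    _ = (n : ℝ)⁻¹ * ∑ i : Fin n, ∫ ω, ε (X i ω) ^ 2 ∂Q := by
        rw [integral_const_mul, integral_finset_sum Finset.univ fun i _ => hci i]
    _ = (n : ℝ)⁻¹ * ∑ _i : Fin n, ∫ x, ε x ^ 2 ∂P := by
        rw [Finset.sum_congr rfl fun i _ => hii i]
    _ = ∫ x, ε x ^ 2 ∂P := by
        rw [Finset.sum_const, Finset.card_univ, Fintype.card_fin, nsmul_eq_mul,
          ← mul_assoc, inv_mul_cancel₀ (ne_of_gt hn'), one_mul]
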